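/- Let G be a Menger algebra of rank n and H a nonempty subset of G. Then the relation P_H = {(g₁, g₂) ∈ G × G | σ_H⟨g₁⟩ = σ_H⟨g₂⟩} is a congruence on G (an equivalence relation that is both l-regular and v-regular). Moreover, if the set W^H = {g ∈ G | σ_H⟨g⟩ = ∅} is nonempty, then W^H is both an s-ideal and an l-ideal of G. -/

import Mathlib

/-- Superassociativity of the (n+1)-ary Menger operation. -/
def SuperAssoc {G : Type*} (n : ℕ) (op : G → (Fin n → G) → G) : Prop :=
  ∀ (f : G) (g h : Fin n → G), op (op f g) h = op f (fun i => op (g i) h)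

/-- The set `T_n(G)` of elementary translations. -/
inductive IsTranslation {G : Type*} (n : ℕ) (op : G → (Fin n → G) → G) : (G → G) → Prop
  | id : IsTranslation n op (fun x => x)
  | step (t : G → G) (ht : IsTranslation n op t) (a : G) (i : Fin n) (b : Fin n → G) :
      IsTranslation n op (fun x => op a (Function.update b i (t x)))

/-- `ρ_H⟨a⟩ = {t ∈ T_n(G) | t(a) ∈ H}`. -/
def rhoSet {G : Type*} (n : ℕ) (op : G → (Fin n → G) → G) (H : Set G) (a : G) :
    Set (G → G) :=
  {t | IsTranslation n op t ∧ t a ∈ H}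

/-- `ρ°_H⟨t⟩ = {a ∈ G | t(a) ∈ H}`. -/
def rhoCirc {G : Type*} (n : ℕ) (op : G → (Fin n → G) → G) (H : Set G) (t : G → G) :
    Set G :=
  {a | t a ∈ H}

/-- `W_H = {a ∈ G | ρ_H⟨a⟩ = ∅}`. -/
def WH {G : Type*} (n : ℕ) (op : G → (Fin n → G) → G) (H : Set G) : Set G :=
  {a | rhoSet n op H a = ∅}

/-- `R_H = {(a,b) | ρ_H⟨a⟩ = ρ_H⟨b⟩}`. -/
def RH {G : Type*} (n : ℕ) (op : G → (Fin n → G) → G) (H : Set G) : G → G → Prop :=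
  fun a b => rhoSet n op H a = rhoSet n op H b

/-- A subset `H` is strong. -/
def Strong {G : Type*} (n : ℕ) (op : G → (Fin n → G) → G) (H : Set G) : Prop :=
  ∀ a b : G, (rhoSet n op H a ∩ rhoSet n op H b).Nonempty →
    rhoSet n op H a = rhoSet n op H b

/-- The action of `B = Gⁿ ∪ {ē}` on `G`; `none` plays the role of `ē`. -/
def act {G : Type*} (n : ℕ) (op : G → (Fin n → G) → G) : G → Option (Fin n → G) → G
  | g, none => g
  | g, some x => op g x

/-- `η_H⟨g⟩ = {x̄ ∈ B | g[x̄] ∈ H}`. -/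
def etaSet {G : Type*} (n : ℕ) (op : G → (Fin n → G) → G) (H : Set G) (g : G) :
    Set (Option (Fin n → G)) :=
  {x | act n op g x ∈ H}

/-- `η°_H⟨x̄⟩ = {g ∈ G | g[x̄] ∈ H}`. -/
def etaCirc {G : Type*} (n : ℕ) (op : G → (Fin n → G) → G) (H : Set G)
    (x : Option (Fin n → G)) : Set G :=
  {g | act n op g x ∈ H}

/-- `_H W = {g ∈ G | η_H⟨g⟩ = ∅}`. -/
def WL {G : Type*} (n : ℕ) (op : G → (Fin n → G) → G) (H : Set G) : Set G :=
  {g | etaSet n op H g = ∅}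

/-- `L_H = {(g₁,g₂) | η_H⟨g₁⟩ = η_H⟨g₂⟩}`. -/
def LH {G : Type*} (n : ℕ) (op : G → (Fin n → G) → G) (H : Set G) : G → G → Prop :=
  fun a b => etaSet n op H a = etaSet n op H b

/-- A subset `H` is l-strong. -/
def LStrong {G : Type*} (n : ℕ) (op : G → (Fin n → G) → G) (H : Set G) : Prop :=
  ∀ a b : G, (etaSet n op H a ∩ etaSet n op H b).Nonempty →
    etaSet n op H a = etaSet n op H b

/-- `σ_H⟨g⟩ = {(x̄,t) ∈ B × T_n(G) | t(g[x̄]) ∈ H}`. -/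
def sigmaSet {G : Type*} (n : ℕ) (op : G → (Fin n → G) → G) (H : Set G) (g : G) :
    Set (Option (Fin n → G) × (G → G)) :=
  {p | IsTranslation n op p.2 ∧ p.2 (act n op g p.1) ∈ H}

/-- `σ°_H⟨x̄,t⟩ = {g ∈ G | t(g[x̄]) ∈ H}`. -/
def sigmaCirc {G : Type*} (n : ℕ) (op : G → (Fin n → G) → G) (H : Set G)
    (x : Option (Fin n → G)) (t : G → G) : Set G :=
  {g | t (act n op g x) ∈ H}

/-- `W^H = {g ∈ G | σ_H⟨g⟩ = ∅}`. -/
def WP {G : Type*} (n : ℕ) (op : G → (Fin n → G) → G) (H : Set G) : Set G :=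
  {g | sigmaSet n op H g = ∅}

/-- `P_H = {(g₁,g₂) | σ_H⟨g₁⟩ = σ_H⟨g₂⟩}`. -/
def PH {G : Type*} (n : ℕ) (op : G → (Fin n → G) → G) (H : Set G) : G → G → Prop :=
  fun a b => sigmaSet n op H a = sigmaSet n op H b

/-- A subset `H` is bistrong. -/
def Bistrong {G : Type*} (n : ℕ) (op : G → (Fin n → G) → G) (H : Set G) : Prop :=
  ∀ a b : G, (sigmaSet n op H a ∩ sigmaSet n op H b).Nonempty →
    sigmaSet n op H a = sigmaSet n op H b

section Aux
variable {G : Type*} {n : ℕ} {op : G → (Fin n → G) → G}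

lemma trans_inner {t : G → G} (ht : IsTranslation n op t) (a : G) (i : Fin n)
    (b : Fin n → G) : IsTranslation n op (fun u => t (op a (Function.update b i u))) := by
  induction ht with
  | id => exact IsTranslation.step _ IsTranslation.id a i b
  | step s hs a' j b' ih => exact IsTranslation.step _ ih a' j b'

lemma PH_lreg (hop : SuperAssoc n op) (H : Set G) (a b : G) (z : Fin n → G)
    (h : PH n op H a b) : PH n op H (op a z) (op b z) := by
  unfold PH at *
  ext ⟨w, t⟩
  cases w with
  | none =>
      have := Set.ext_iff.mp h (some z, t)
      simpa [sigmaSet, act] using this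
  | some w =>
      have := Set.ext_iff.mp h (some (fun i => op (z i) w), t)
      simp only [sigmaSet, act, Set.mem_setOf_eq] at this ⊢
      rw [hop, hop]
      exact this

lemma mix_mem (hop : SuperAssoc n op) (H : Set G) (z : G) (x y : Fin n → G)
    (hxy : ∀ i, PH n op H (x i) (y i)) {t : G → G} (ht : IsTranslation n op t) :
    (t (op z x) ∈ H ↔ t (op z y) ∈ H) := by
  classical
  let mix : ℕ → Fin n → G := fun k i => if i.val < k then y i else x i
  have key : ∀ k, k ≤ n → (t (op z x) ∈ H ↔ t (op z (mix k)) ∈ H) := by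
    intro k
    induction k with
    | zero =>
        intro _
        have : mix 0 = x := by funext i; simp [mix]
        rw [this]
    | succ k ih =>
        intro hk
        have hk' : k < n := hk
        refine (ih (Nat.le_of_lt hk')).trans ?_
        set i : Fin n := ⟨k, hk'⟩ with hi
        have h1 : Function.update (mix k) i (x i) = mix k := by
          have hx : x i = mix k i := by simp [mix, hi]
          rw [hx, Function.update_eq_self]
        have h2 : mix (k + 1) = Function.update (mix k) i (y i) := by
          funext j
          rcases eq_or_ne j i with rfl | hj
          · simp [mix, hi]
          · have hjk : j.val ≠ k := by
              intro hc; exact hj (Fin.ext hc)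
            rw [Function.update_of_ne hj]
            simp only [mix]
            rcases Nat.lt_or_ge j.val k with h | h
            · rw [if_pos h, if_pos (Nat.lt_succ_of_lt h)]
            · have h' : ¬ j.val < k := Nat.not_lt.mpr h
              have h'' : ¬ j.val < k + 1 := by
                intro hc
                exact hjk (Nat.le_antisymm (Nat.lt_succ_iff.mp hc) h)
              rw [if_neg h', if_neg h'']
        have ht' : IsTranslation n op (fun u => t (op z (Function.update (mix k) i u))) :=
          trans_inner ht z i (mix k)
        have := Set.ext_iff.mp (hxy i) (none, fun u => t (op z (Function.update (mix k) i u)))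
        simp only [sigmaSet, act, Set.mem_setOf_eq] at this
        have heq : (t (op z (Function.update (mix k) i (x i))) ∈ H) ↔
            (t (op z (Function.update (mix k) i (y i))) ∈ H) := by
          constructor
          · intro hh; exact (this.mp ⟨ht', hh⟩).2
          · intro hh; exact (this.mpr ⟨ht', hh⟩).2
        rw [h1, ← h2] at heq
        exact heq
  have hmix : mix n = y := by
    funext i; simp [mix, i.isLt]
  have := key n le_rfl
  rwa [hmix] at this

end Aux

theorem stmt18 {G : Type*} [Nonempty G] {n : ℕ} (hn : 1 ≤ n)
    (op : G → (Fin n → G) → G) (hop : SuperAssoc n op) (H : Set G) (hne : H.Nonempty) :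
    (Equivalence (PH n op H) ∧
     (∀ (a b : G) (z : Fin n → G), PH n op H a b → PH n op H (op a z) (op b z)) ∧
     (∀ (z : G) (x y : Fin n → G), (∀ i, PH n op H (x i) (y i)) →
        PH n op H (op z x) (op z y))) ∧
    ((WP n op H).Nonempty →
      (∀ h ∈ WP n op H, ∀ x : Fin n → G, op h x ∈ WP n op H) ∧
      (∀ (x : G) (h : Fin n → G), (∃ i, h i ∈ WP n op H) → op x h ∈ WP n op H)) := by
  constructor
  · refine ⟨⟨fun _ => rfl, Eq.symm, Eq.trans⟩, fun a b z h => PH_lreg hop H a b z h, ?_⟩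
    intro z x y hxy
    unfold PH
    ext ⟨w, t⟩
    cases w with
    | none =>
        simp only [sigmaSet, act, Set.mem_setOf_eq]
        constructor
        · rintro ⟨ht, hm⟩; exact ⟨ht, (mix_mem hop H z x y hxy ht).mp hm⟩
        · rintro ⟨ht, hm⟩; exact ⟨ht, (mix_mem hop H z x y hxy ht).mpr hm⟩
    | some w =>
        simp only [sigmaSet, act, Set.mem_setOf_eq]
        rw [hop, hop]
        have hxy' : ∀ i, PH n op H (op (x i) w) (op (y i) w) :=
          fun i => PH_lreg hop H (x i) (y i) w (hxy i)
        constructor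
        · rintro ⟨ht, hm⟩
          exact ⟨ht, (mix_mem hop H z _ _ hxy' ht).mp hm⟩
        · rintro ⟨ht, hm⟩
          exact ⟨ht, (mix_mem hop H z _ _ hxy' ht).mpr hm⟩
  · intro _
    constructor
    · intro h hh x
      simp only [WP, Set.mem_setOf_eq, Set.eq_empty_iff_forall_notMem] at hh ⊢
      rintro ⟨w, t⟩ ⟨ht, hm⟩
      cases w with
      | none =>
          exact hh (some x, t) ⟨ht, hm⟩
      | some w =>
          simp only [act] at hm
          rw [hop] at hm
          exact hh (some (fun i => op (x i) w), t) ⟨ht, hm⟩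
    · rintro x h ⟨i, hi⟩
      simp only [WP, Set.mem_setOf_eq, Set.eq_empty_iff_forall_notMem] at hi ⊢
      rintro ⟨w, t⟩ ⟨ht, hm⟩
      cases w with
      | none =>
          refine hi (none, fun u => t (op x (Function.update h i u)))
            ⟨trans_inner ht x i h, ?_⟩
          simpa [act, Function.update_eq_self] using hm
      | some w =>
          simp only [act] at hm
          rw [hop] at hm
          refine hi (some w, fun u => t (op x (Function.update (fun j => op (h j) w) i u)))
            ⟨trans_inner ht x i _, ?_⟩
          simpa [act, Function.update_eq_self] using hm
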